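/- Let G = (S, C, ∅) be a thick spider graph of weight r ≥ 3 (headless). Then γ_{gr}^{×2}(G) = r + 2, and the sequence (s_1,...,s_r, c_1, c_2) is a Grundy double dominating sequence of G. -/

import Mathlib

open SimpleGraph

variable {V : Type*}

/-- The closed neighborhood of a vertex. -/
def cnbr (G : SimpleGraph V) (v : V) : Set V := insert v (G.neighborSet v)

/-- The number of vertices in the list `l` that dominate `u` (i.e. whose closed
neighborhood contains `u`). -/
noncomputable def domCount (G : SimpleGraph V) (u : V) (l : List V) : ℕ :=
  {w | w ∈ l ∧ u ∈ cnbr G w}.ncard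

/-- A double neighborhood sequence (DNS): a sequence of distinct vertices in which each
vertex dominates some vertex dominated at most once by its predecessors. -/
def IsDNS (G : SimpleGraph V) (l : List V) : Prop :=
  l.Nodup ∧ ∀ i : Fin l.length, ∃ u ∈ cnbr G (l.get i), domCount G u (l.take i) ≤ 1

/-- A double dominating sequence (DDS): a DNS whose underlying set is doubly dominating. -/
def IsDDS (G : SimpleGraph V) (l : List V) : Prop :=
  IsDNS G l ∧ ∀ v, 2 ≤ domCount G v l

/-- The Grundy double domination number: maximum length of a DDS. -/
noncomputable def gddn (G : SimpleGraph V) : ℕ :=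
  sSup {n | ∃ l : List V, IsDDS G l ∧ l.length = n}

/-- The maximum double neighborhood number: maximum length of a DNS. -/
noncomputable def mdnn (G : SimpleGraph V) : ℕ :=
  sSup {n | ∃ l : List V, IsDNS G l ∧ l.length = n}

/-- A legal (Grundy domination) sequence. -/
def IsLegal (G : SimpleGraph V) (l : List V) : Prop :=
  l.Nodup ∧ ∀ i : Fin l.length, ∃ u ∈ cnbr G (l.get i), domCount G u (l.take i) = 0

/-- A dominating sequence: legal sequence whose underlying set dominates. -/
def IsDomSeq (G : SimpleGraph V) (l : List V) : Prop :=
  IsLegal G l ∧ ∀ v, 1 ≤ domCount G v l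

/-- The Grundy domination number: maximum length of a dominating sequence. -/
noncomputable def grundy (G : SimpleGraph V) : ℕ :=
  sSup {n | ∃ l : List V, IsDomSeq G l ∧ l.length = n}

/-- The double domination number: minimum size of a double dominating set. -/
noncomputable def ddomNum (G : SimpleGraph V) : ℕ :=
  sInf {n | ∃ D : Set V, (∀ v, 2 ≤ {w | w ∈ D ∧ v ∈ cnbr G w}.ncard) ∧ D.ncard = n}

/-- The headless thick spider of weight `r`: stable set `S` (left copies), clique `C`
(right copies), with `s i` adjacent to `c j` iff `i ≠ j`. -/
def thickSpider (r : ℕ) : SimpleGraph (Fin r ⊕ Fin r) where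
  Adj a b := match a, b with
    | .inl _, .inl _ => False
    | .inl i, .inr j => i ≠ j
    | .inr i, .inl j => i ≠ j
    | .inr i, .inr j => i ≠ j
  symm := by
    constructor
    rintro (i | i) (j | j) h
    · exact h
    · exact fun e => h e.symm
    · exact fun e => h e.symm
    · exact fun e => h e.symm
  loopless := by
    constructor
    rintro (i | i) h
    · exact h
    · exact h rfl


section Stmt19Aux

open Sum

variable {r : ℕ}

lemma mem_cnbr' {G : SimpleGraph V} {u w : V} : u ∈ cnbr G w ↔ u = w ∨ G.Adj w u := by
  simp [cnbr, SimpleGraph.mem_neighborSet]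

lemma cnbr_ll {i j : Fin r} : (inl j : Fin r ⊕ Fin r) ∈ cnbr (thickSpider r) (inl i) ↔ j = i := by
  simp [mem_cnbr', thickSpider]

lemma cnbr_rl {i j : Fin r} : (inr j : Fin r ⊕ Fin r) ∈ cnbr (thickSpider r) (inl i) ↔ i ≠ j := by
  simp [mem_cnbr', thickSpider]

lemma cnbr_lr {i j : Fin r} : (inl j : Fin r ⊕ Fin r) ∈ cnbr (thickSpider r) (inr i) ↔ i ≠ j := by
  simp [mem_cnbr', thickSpider]

lemma cnbr_rr {i j : Fin r} : (inr j : Fin r ⊕ Fin r) ∈ cnbr (thickSpider r) (inr i) := by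
  rcases eq_or_ne j i with h | h
  · exact mem_cnbr'.mpr (Or.inl (by rw [h]))
  · exact mem_cnbr'.mpr (Or.inr (by simpa [thickSpider] using h.symm))

lemma two_le_domCount [Finite V] {G : SimpleGraph V} {u : V} {l : List V} {w1 w2 : V}
    (h1 : w1 ∈ l) (h2 : w2 ∈ l) (hne : w1 ≠ w2) (hc1 : u ∈ cnbr G w1) (hc2 : u ∈ cnbr G w2) :
    2 ≤ domCount G u l := by
  have hsub : ({w1, w2} : Set V) ⊆ {w | w ∈ l ∧ u ∈ cnbr G w} := by
    intro x hx
    rcases hx with rfl | hx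
    · exact ⟨h1, hc1⟩
    · rcases hx with rfl
      exact ⟨h2, hc2⟩
  calc 2 = ({w1, w2} : Set V).ncard := (Set.ncard_pair hne).symm
    _ ≤ _ := Set.ncard_le_ncard hsub (Set.toFinite _)

lemma domCount_le_one {G : SimpleGraph V} {u : V} {l : List V} {x : V}
    (h : ∀ w ∈ l, u ∈ cnbr G w → w = x) : domCount G u l ≤ 1 := by
  have hsub : {w | w ∈ l ∧ u ∈ cnbr G w} ⊆ {x} := by
    rintro w ⟨hw, hc⟩; exact h w hw hc
  simpa [domCount] using Set.ncard_le_ncard hsub (Set.finite_singleton x)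

/-- If the prefix contains three distinct clique vertices, every vertex is already
doubly dominated. -/
lemma three_inr_block {P : List (Fin r ⊕ Fin r)} {a b c : Fin r}
    (hab : a ≠ b) (hac : a ≠ c) (hbc : b ≠ c)
    (ha : inr a ∈ P) (hb : inr b ∈ P) (hc : inr c ∈ P) (u : Fin r ⊕ Fin r) :
    2 ≤ domCount (thickSpider r) u P := by
  cases u with
  | inr m => exact two_le_domCount ha hb (by simp [hab]) cnbr_rr cnbr_rr
  | inl j =>
    by_cases hja : a = j
    · exact two_le_domCount hb hc (by simpa using hbc)
        (cnbr_lr.mpr (by rintro rfl; exact hab hja)) (cnbr_lr.mpr (by rintro rfl; exact hac hja))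
    · by_cases hjb : b = j
      · exact two_le_domCount ha hc (by simpa using hac)
          (cnbr_lr.mpr hja) (cnbr_lr.mpr (by rintro rfl; exact hbc hjb))
      · exact two_le_domCount ha hb (by simpa using hab)
          (cnbr_lr.mpr hja) (cnbr_lr.mpr hjb)

/-- If the prefix contains two distinct clique vertices `inr a`, `inr b`, any vertex still
dominated at most once is an `inl j` with `j ∈ {a,b}` and `inl j` not in the prefix. -/
lemma witness_classify {P : List (Fin r ⊕ Fin r)} {a b : Fin r} (hab : a ≠ b)
    (ha : inr a ∈ P) (hb : inr b ∈ P) {u : Fin r ⊕ Fin r}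
    (hu : domCount (thickSpider r) u P ≤ 1) :
    ∃ j : Fin r, u = inl j ∧ (j = a ∨ j = b) ∧ inl j ∉ P := by
  cases u with
  | inr m =>
    have h2 := two_le_domCount (u := inr m) ha hb (by simp [hab]) cnbr_rr cnbr_rr
    exact absurd h2 (by omega)
  | inl j =>
    refine ⟨j, rfl, ?_, ?_⟩
    · by_contra hcon
      push_neg at hcon
      exact absurd (two_le_domCount ha hb (by simp [hab])
        (cnbr_lr.mpr (fun e => hcon.1 e.symm)) (cnbr_lr.mpr (fun e => hcon.2 e.symm)))
        (by omega)
    · intro hjP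
      rcases eq_or_ne a j with rfl | haj
      · exact absurd (two_le_domCount hjP hb (by simp)
          (cnbr_ll.mpr rfl) (cnbr_lr.mpr (fun e => hab e.symm))) (by omega)
      · exact absurd (two_le_domCount hjP ha (by simp)
          (cnbr_ll.mpr rfl) (cnbr_lr.mpr haj)) (by omega)

lemma mem_take_of_lt {l : List V} (i j : Fin l.length) (hij : (i : ℕ) < (j : ℕ)) :
    l.get i ∈ l.take (j : ℕ) := by
  have hlen : (i : ℕ) < (l.take (j : ℕ)).length := by
    rw [List.length_take]
    exact lt_min hij i.isLt
  have : (l.take (j : ℕ))[(i : ℕ)]'hlen = l.get i := by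
    rw [List.getElem_take]
    rfl
  exact this ▸ List.getElem_mem hlen

/-- Upper bound: every DNS of the headless thick spider has length at most `r + 2`. -/
lemma dns_length_le (hr : 3 ≤ r) {l : List (Fin r ⊕ Fin r)}
    (h : IsDNS (thickSpider r) l) : l.length ≤ r + 2 := by
  classical
  obtain ⟨hnd, hwit⟩ := h
  have hinj : Function.Injective l.get := List.nodup_iff_injective_get.mp hnd
  set Ir : Finset (Fin l.length) := Finset.univ.filter (fun i => (l.get i).isRight) with hIrdef
  set Il : Finset (Fin l.length) := Finset.univ.filter (fun i => ¬ (l.get i).isRight) with hIldef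
  have hval : ∀ i ∈ Ir, ∃ k : Fin r, l.get i = inr k := by
    intro i hi
    rw [hIrdef, Finset.mem_filter] at hi
    exact Sum.isRight_iff.mp hi.2
  have hsum : Ir.card + Il.card = l.length := by
    rw [hIrdef, hIldef, Finset.card_filter_add_card_filter_not]
    simp
  set g : Fin l.length → Fin r := fun i => Sum.elim id (fun _ => ⟨0, by omega⟩) (l.get i) with hgdef
  have hg : ∀ i ∈ Il, l.get i = inl (g i) := by
    intro i hi
    rw [hIldef, Finset.mem_filter] at hi
    cases hget : l.get i with
    | inl j => simp [hgdef, ← List.get_eq_getElem, hget]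
    | inr j => rw [hget] at hi; simp at hi
  have hginj : Set.InjOn g Il := by
    intro i hi i' hi' he
    exact hinj (by rw [hg i hi, hg i' hi', he])
  -- distinct indices in Ir give distinct inr-values
  have hvne : ∀ i i' : Fin l.length, i ≠ i' → ∀ k k' : Fin r,
      l.get i = inr k → l.get i' = inr k' → k ≠ k' := by
    intro i i' hne k k' hk hk' he
    exact hne (hinj (by rw [hk, hk', he]))
  have hIr3 : Ir.card ≤ 3 := by
    by_contra hcon
    push_neg at hcon
    have hne4 : Ir.Nonempty := Finset.card_pos.mp (by omega)
    set i4 := Ir.max' hne4 with hi4def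
    have hc1 : 3 ≤ (Ir.erase i4).card := by
      rw [Finset.card_erase_of_mem (Ir.max'_mem hne4)]; omega
    obtain ⟨i1, hm1⟩ := Finset.card_pos.mp (show 0 < (Ir.erase i4).card by omega)
    have hc2 : 2 ≤ ((Ir.erase i4).erase i1).card := by
      rw [Finset.card_erase_of_mem hm1]; omega
    obtain ⟨i2, hm2⟩ := Finset.card_pos.mp (show 0 < ((Ir.erase i4).erase i1).card by omega)
    obtain ⟨i3, hm3⟩ := Finset.card_pos.mp
      (show 0 < (((Ir.erase i4).erase i1).erase i2).card by
        rw [Finset.card_erase_of_mem hm2]; omega)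
    have hm3' : i3 ∈ (Ir.erase i4).erase i1 := Finset.mem_of_mem_erase hm3
    have hm2' : i2 ∈ Ir.erase i4 := Finset.mem_of_mem_erase hm2
    have hm3'' : i3 ∈ Ir.erase i4 := Finset.mem_of_mem_erase hm3'
    have hi1r : i1 ∈ Ir := Finset.mem_of_mem_erase hm1
    have hi2r : i2 ∈ Ir := Finset.mem_of_mem_erase hm2'
    have hi3r : i3 ∈ Ir := Finset.mem_of_mem_erase hm3''
    have hlt : ∀ i ∈ Ir.erase i4, (i : ℕ) < (i4 : ℕ) := by
      intro i hi
      have hle : i ≤ i4 := Finset.le_max' Ir i (Finset.mem_of_mem_erase hi)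
      exact Fin.lt_def.mp (lt_of_le_of_ne hle (Finset.ne_of_mem_erase hi))
    obtain ⟨k1, hk1⟩ := hval i1 hi1r
    obtain ⟨k2, hk2⟩ := hval i2 hi2r
    obtain ⟨k3, hk3⟩ := hval i3 hi3r
    have h12 : i1 ≠ i2 := fun e => (Finset.ne_of_mem_erase hm2) e.symm
    have h13 : i1 ≠ i3 := fun e => (Finset.ne_of_mem_erase hm3') e.symm
    have h23 : i2 ≠ i3 := fun e => (Finset.ne_of_mem_erase hm3) e.symm
    obtain ⟨u, _, hu2⟩ := hwit i4
    have := three_inr_block (hvne i1 i2 h12 k1 k2 hk1 hk2)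
      (hvne i1 i3 h13 k1 k3 hk1 hk3) (hvne i2 i3 h23 k2 k3 hk2 hk3)
      (hk1 ▸ mem_take_of_lt i1 i4 (hlt i1 hm1))
      (hk2 ▸ mem_take_of_lt i2 i4 (hlt i2 hm2'))
      (hk3 ▸ mem_take_of_lt i3 i4 (hlt i3 hm3'')) u
    omega
  by_cases hcase : Ir.card ≤ 2
  · have hIl : Il.card ≤ r := by
      have := Finset.card_le_card_of_injOn g (fun i _ => Finset.mem_univ (g i)) hginj
      simpa using this
    omega
  · push_neg at hcase
    have hIr : Ir.card = 3 := by omega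
    have hne3 : Ir.Nonempty := Finset.card_pos.mp (by omega)
    set i3 := Ir.max' hne3 with hi3def
    obtain ⟨i1, hm1⟩ := Finset.card_pos.mp
      (show 0 < (Ir.erase i3).card by rw [Finset.card_erase_of_mem (Ir.max'_mem hne3)]; omega)
    obtain ⟨i2, hm2⟩ := Finset.card_pos.mp
      (show 0 < ((Ir.erase i3).erase i1).card by
        rw [Finset.card_erase_of_mem hm1, Finset.card_erase_of_mem (Ir.max'_mem hne3)]; omega)
    have hm2' : i2 ∈ Ir.erase i3 := Finset.mem_of_mem_erase hm2
    have hi1r : i1 ∈ Ir := Finset.mem_of_mem_erase hm1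
    have hi2r : i2 ∈ Ir := Finset.mem_of_mem_erase hm2'
    have hlt : ∀ i ∈ Ir.erase i3, (i : ℕ) < (i3 : ℕ) := by
      intro i hi
      have hle : i ≤ i3 := Finset.le_max' Ir i (Finset.mem_of_mem_erase hi)
      exact Fin.lt_def.mp (lt_of_le_of_ne hle (Finset.ne_of_mem_erase hi))
    obtain ⟨a, hka⟩ := hval i1 hi1r
    obtain ⟨b, hkb⟩ := hval i2 hi2r
    obtain ⟨c, hkc⟩ := hval i3 (Ir.max'_mem hne3)
    have h12 : i1 ≠ i2 := fun e => (Finset.ne_of_mem_erase hm2) e.symm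
    have hab : a ≠ b := hvne i1 i2 h12 a b hka hkb
    have hac : a ≠ c := hvne i1 i3 (Finset.ne_of_mem_erase hm1) a c hka hkc
    have hbc : b ≠ c := hvne i2 i3 (Finset.ne_of_mem_erase hm2') b c hkb hkc
    obtain ⟨u, _, hu2⟩ := hwit i3
    obtain ⟨j, rfl, _, hjP⟩ := witness_classify hab
      (hka ▸ mem_take_of_lt i1 i3 (hlt i1 hm1))
      (hkb ▸ mem_take_of_lt i2 i3 (hlt i2 hm2')) hu2
    have hjl : (inl j : Fin r ⊕ Fin r) ∉ l := by
      intro hmem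
      obtain ⟨q, hq⟩ := List.mem_iff_get.mp hmem
      have hq3 : (i3 : ℕ) < (q : ℕ) := by
        rcases lt_trichotomy (q : ℕ) (i3 : ℕ) with hlt' | heq | hgt
        · exact absurd (hq ▸ mem_take_of_lt q i3 hlt') hjP
        · have : q = i3 := Fin.ext heq
          rw [this, hkc] at hq
          exact absurd hq (by simp)
        · exact hgt
      obtain ⟨u', _, hu'2⟩ := hwit q
      have := three_inr_block hab hac hbc
        (hka ▸ mem_take_of_lt i1 q (lt_trans (hlt i1 hm1) hq3))
        (hkb ▸ mem_take_of_lt i2 q (lt_trans (hlt i2 hm2') hq3))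
        (hkc ▸ mem_take_of_lt i3 q hq3) u'
      omega
    have hIl : Il.card ≤ r - 1 := by
      have hmaps : ∀ i ∈ Il, g i ∈ Finset.univ.erase j := by
        intro i hi
        refine Finset.mem_erase.mpr ⟨?_, Finset.mem_univ _⟩
        intro e
        have hmem' : l.get i ∈ l := by
          rw [List.get_eq_getElem]
          exact List.getElem_mem i.isLt
        rw [hg i hi, e] at hmem'
        exact hjl hmem'
      have := Finset.card_le_card_of_injOn g hmaps hginj
      simpa [Finset.card_erase_of_mem] using this
    omega

/-- The explicit sequence is a DDS. -/
lemma main_dds (hr : 3 ≤ r) {h0 : 0 < r} {h1 : 1 < r} :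
    IsDDS (thickSpider r)
      ((List.finRange r).map Sum.inl ++ [Sum.inr (⟨0, h0⟩ : Fin r), Sum.inr (⟨1, h1⟩ : Fin r)]) := by
  classical
  have hAlen : ((List.finRange r).map (Sum.inl : Fin r → Fin r ⊕ Fin r)).length = r := by simp
  have hc01 : (⟨0, h0⟩ : Fin r) ≠ ⟨1, h1⟩ := by simp [Fin.ext_iff]
  have hmemA : ∀ w ∈ (List.finRange r).map (Sum.inl : Fin r → Fin r ⊕ Fin r),
      ∃ j : Fin r, w = inl j := by
    intro w hw
    rw [List.mem_map] at hw
    obtain ⟨j, _, rfl⟩ := hw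
    exact ⟨j, rfl⟩
  have hInlA : ∀ j : Fin r, (inl j : Fin r ⊕ Fin r) ∈ (List.finRange r).map Sum.inl := by
    intro j; rw [List.mem_map]; exact ⟨j, List.mem_finRange j, rfl⟩
  refine ⟨⟨?_, ?_⟩, ?_⟩
  · -- Nodup
    refine List.Nodup.append ?_ ?_ ?_
    · exact (List.nodup_finRange r).map (fun x y => Sum.inl.inj)
    · simp [Fin.ext_iff]
    · intro x hx hy
      obtain ⟨j, rfl⟩ := hmemA x hx
      simp at hy
  · -- DNS property
    intro i
    have hm : (i : ℕ) < r + 2 := by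
      have := i.isLt
      simpa using this
    rcases lt_trichotomy (i : ℕ) r with hmr | hmr | hmr
    · -- adding a stable vertex
      have hget : ((List.finRange r).map (Sum.inl : Fin r → Fin r ⊕ Fin r) ++
          [Sum.inr (⟨0, h0⟩ : Fin r), Sum.inr (⟨1, h1⟩ : Fin r)]).get i = inl ⟨(i : ℕ), hmr⟩ := by
        rw [List.get_eq_getElem,
          List.getElem_append_left (show (i : ℕ) < _ by rw [hAlen]; exact hmr),
          List.getElem_map, List.getElem_finRange]
        rfl
      refine ⟨inl ⟨(i : ℕ), hmr⟩, by rw [hget]; exact cnbr_ll.mpr rfl, ?_⟩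
      have htake : ((List.finRange r).map (Sum.inl : Fin r → Fin r ⊕ Fin r) ++
          [Sum.inr (⟨0, h0⟩ : Fin r), Sum.inr (⟨1, h1⟩ : Fin r)]).take (i : ℕ)
          = ((List.finRange r).take (i : ℕ)).map Sum.inl := by
        rw [List.take_append_of_le_length (by rw [hAlen]; omega), ← List.map_take]
      rw [htake]
      apply domCount_le_one (x := inl ⟨(i : ℕ), hmr⟩)
      intro w hw hcw
      rw [List.mem_map] at hw
      obtain ⟨j, hj, rfl⟩ := hw
      have hjlt : (j : ℕ) < (i : ℕ) := by
        obtain ⟨p, hp, hpe⟩ := List.mem_iff_getElem.mp hj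
        rw [List.getElem_take, List.getElem_finRange] at hpe
        rw [List.length_take] at hp
        have : (j : ℕ) = p := by rw [← hpe]; rfl
        omega
      have := cnbr_ll.mp hcw
      rw [← this] at hjlt
      simp at hjlt
    · -- adding inr ⟨0,_⟩
      have hget : ((List.finRange r).map (Sum.inl : Fin r → Fin r ⊕ Fin r) ++
          [Sum.inr (⟨0, h0⟩ : Fin r), Sum.inr (⟨1, h1⟩ : Fin r)]).get i = inr ⟨0, h0⟩ := by
        rw [List.get_eq_getElem,
          List.getElem_append_right (by rw [hAlen]; omega)]
        simp [hAlen, hmr]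
      have htake : ((List.finRange r).map (Sum.inl : Fin r → Fin r ⊕ Fin r) ++
          [Sum.inr (⟨0, h0⟩ : Fin r), Sum.inr (⟨1, h1⟩ : Fin r)]).take (i : ℕ)
          = (List.finRange r).map (Sum.inl : Fin r → Fin r ⊕ Fin r) := by
        rw [List.take_append_of_le_length (by rw [hAlen]; omega)]
        exact List.take_of_length_le (by rw [hAlen]; omega)
      refine ⟨inl ⟨1, h1⟩, by rw [hget]; exact cnbr_lr.mpr (by simp [Fin.ext_iff]), ?_⟩
      rw [htake]
      apply domCount_le_one (x := inl ⟨1, h1⟩)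
      intro w hw hcw
      obtain ⟨j, rfl⟩ := hmemA w hw
      rw [cnbr_ll.mp hcw]
    · -- adding inr ⟨1,_⟩
      have hmr' : (i : ℕ) = r + 1 := by omega
      have hget : ((List.finRange r).map (Sum.inl : Fin r → Fin r ⊕ Fin r) ++
          [Sum.inr (⟨0, h0⟩ : Fin r), Sum.inr (⟨1, h1⟩ : Fin r)]).get i = inr ⟨1, h1⟩ := by
        rw [List.get_eq_getElem,
          List.getElem_append_right (by rw [hAlen]; omega)]
        simp [hAlen, hmr']
      have htake : ((List.finRange r).map (Sum.inl : Fin r → Fin r ⊕ Fin r) ++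
          [Sum.inr (⟨0, h0⟩ : Fin r), Sum.inr (⟨1, h1⟩ : Fin r)]).take (i : ℕ)
          = (List.finRange r).map (Sum.inl : Fin r → Fin r ⊕ Fin r) ++ [Sum.inr (⟨0, h0⟩ : Fin r)] := by
        have hlen2 : ((List.finRange r).map (Sum.inl : Fin r → Fin r ⊕ Fin r) ++
            [Sum.inr (⟨0, h0⟩ : Fin r)]).length = r + 1 := by simp
        have hgen : ∀ m : ℕ, m = r + 1 →
            ((List.finRange r).map (Sum.inl : Fin r → Fin r ⊕ Fin r) ++
              [Sum.inr (⟨0, h0⟩ : Fin r), Sum.inr (⟨1, h1⟩ : Fin r)]).take m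
            = (List.finRange r).map (Sum.inl : Fin r → Fin r ⊕ Fin r) ++
              [Sum.inr (⟨0, h0⟩ : Fin r)] := by
          intro m hm
          have hsplit : ([Sum.inr (⟨0, h0⟩ : Fin r), Sum.inr (⟨1, h1⟩ : Fin r)] :
              List (Fin r ⊕ Fin r))
              = [Sum.inr (⟨0, h0⟩ : Fin r)] ++ [Sum.inr (⟨1, h1⟩ : Fin r)] := rfl
          rw [hsplit, ← List.append_assoc, hm]
          rw [List.take_append_of_le_length (by rw [hlen2])]
          exact List.take_of_length_le (by rw [hlen2])
        exact hgen _ hmr'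
      refine ⟨inl ⟨0, h0⟩, by rw [hget]; exact cnbr_lr.mpr (by simp [Fin.ext_iff]), ?_⟩
      rw [htake]
      apply domCount_le_one (x := inl ⟨0, h0⟩)
      intro w hw hcw
      rw [List.mem_append] at hw
      rcases hw with hw | hw
      · obtain ⟨j, rfl⟩ := hmemA w hw
        rw [cnbr_ll.mp hcw]
      · simp only [List.mem_singleton] at hw
        subst hw
        have := cnbr_lr.mp hcw
        exact absurd rfl this
  · -- double domination
    intro v
    have hc0L : (inr ⟨0, h0⟩ : Fin r ⊕ Fin r) ∈
        (List.finRange r).map Sum.inl ++ [Sum.inr (⟨0, h0⟩ : Fin r), Sum.inr (⟨1, h1⟩ : Fin r)] := by simp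
    have hc1L : (inr ⟨1, h1⟩ : Fin r ⊕ Fin r) ∈
        (List.finRange r).map Sum.inl ++ [Sum.inr (⟨0, h0⟩ : Fin r), Sum.inr (⟨1, h1⟩ : Fin r)] := by simp
    cases v with
    | inr i => exact two_le_domCount hc0L hc1L (by simp [hc01]) cnbr_rr cnbr_rr
    | inl i =>
      have hiL : (inl i : Fin r ⊕ Fin r) ∈
          (List.finRange r).map Sum.inl ++ [Sum.inr (⟨0, h0⟩ : Fin r), Sum.inr (⟨1, h1⟩ : Fin r)] :=
        List.mem_append_left _ (hInlA i)
      rcases eq_or_ne i ⟨0, h0⟩ with rfl | hne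
      · exact two_le_domCount hiL hc1L (by simp)
          (cnbr_ll.mpr rfl) (cnbr_lr.mpr hc01.symm)
      · exact two_le_domCount hiL hc0L (by simp)
          (cnbr_ll.mpr rfl) (cnbr_lr.mpr (fun e => hne e.symm))

end Stmt19Aux

/-- for the headless thick spider of weight r ≥ 3, the Grundy double
domination number equals r + 2, attained by the sequence (s₁,…,s_r,c₁,c₂). -/
theorem stmt19 (r : ℕ) (hr : 3 ≤ r) :
    gddn (thickSpider r) = r + 2 ∧
    IsDDS (thickSpider r)
      ((List.finRange r).map Sum.inl ++ [Sum.inr (⟨0, by omega⟩ : Fin r), Sum.inr (⟨1, by omega⟩ : Fin r)]) ∧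
    ((List.finRange r).map Sum.inl ++
        [Sum.inr (⟨0, by omega⟩ : Fin r), Sum.inr (⟨1, by omega⟩ : Fin r)]).length = gddn (thickSpider r) := by
  have hdds : IsDDS (thickSpider r)
      ((List.finRange r).map Sum.inl ++
        [Sum.inr (⟨0, by omega⟩ : Fin r), Sum.inr (⟨1, by omega⟩ : Fin r)]) := main_dds hr
  have hlen : ((List.finRange r).map Sum.inl ++
      [Sum.inr (⟨0, by omega⟩ : Fin r), Sum.inr (⟨1, by omega⟩ : Fin r)]).length = r + 2 := by
    simp
  have hbdd : ∀ n ∈ {n | ∃ l : List (Fin r ⊕ Fin r), IsDDS (thickSpider r) l ∧ l.length = n},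
      n ≤ r + 2 := by
    rintro n ⟨l, hl, rfl⟩
    exact dns_length_le hr hl.1
  have hmem : r + 2 ∈ {n | ∃ l : List (Fin r ⊕ Fin r), IsDDS (thickSpider r) l ∧ l.length = n} :=
    ⟨_, hdds, hlen⟩
  have hsup : gddn (thickSpider r) = r + 2 := by
    apply le_antisymm
    · exact csSup_le ⟨r + 2, hmem⟩ hbdd
    · exact le_csSup ⟨r + 2, hbdd⟩ hmem
  exact ⟨hsup, hdds, by rw [hsup]; exact hlen⟩
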